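/- (Existence of optimal encoding and decoding strategies for the Gaussian test channel.) Let σ₁ > 0, σ_w > 0 and λ > 0. Let X₁ and W₂ be independent real-valued random variables with X₁ ~ N(0,σ₁²) and W₂ ~ N(0,σ_w²). For Borel measurable functions γ₁, γ₂ : ℝ → ℝ define J(γ₁,γ₂) = E[λ·γ₁(X₁)² + (γ₂(γ₁(X₁) + W₂) − X₁)²], valued in [0,∞]. Then the infimum of J over all pairs of Borel measurable functions γ₁, γ₂ : ℝ → ℝ is finite and is attained: there exist Borel measurable γ₁*, γ₂* : ℝ → ℝ with J(γ₁*,γ₂*) = inf_{γ₁,γ₂ Borel measurable} J(γ₁,γ₂). -/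

import Mathlib

open MeasureTheory ProbabilityTheory
open scoped ENNReal NNReal

noncomputable section

section GaussianTestChannelAux

open Real Filter



lemma integrable_sq_exp {b : ℝ} (hb : 0 < b) :
    Integrable (fun x : ℝ => x ^ 2 * rexp (-b * x ^ 2)) := by
  have h1 : Integrable (fun x : ℝ => rexp (-(b/2) * x ^ 2)) := integrable_exp_neg_mul_sq (by linarith)
  refine (h1.const_mul (2/b)).mono' ?_ ?_
  · exact (by fun_prop : Measurable fun x : ℝ => x ^ 2 * rexp (-b * x ^ 2)).aestronglyMeasurable
  · refine Filter.Eventually.of_forall fun x => ?_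
    have hb2 : (0:ℝ) < 2/b := by positivity
    have ht : b/2 * x^2 ≤ rexp (b/2 * x ^ 2) :=
      le_trans (by linarith [Real.add_one_le_exp (b/2 * x^2)]) le_rfl
    have hx : x ^ 2 ≤ 2/b * rexp (b/2 * x ^ 2) := by
      have h4 := mul_le_mul_of_nonneg_left ht hb2.le
      have h3 : 2/b * (b/2 * x^2) = x ^ 2 := by field_simp
      linarith [h3 ▸ h4]
    have hmul : rexp (b/2 * x^2) * rexp (-b * x^2) = rexp (-(b/2) * x^2) := by
      rw [← Real.exp_add]; congr 1; ring
    rw [Real.norm_eq_abs, abs_mul, abs_of_nonneg (sq_nonneg x), abs_of_nonneg (Real.exp_pos _).le]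
    calc x ^ 2 * rexp (-b * x ^ 2)
        ≤ (2/b * rexp (b/2 * x ^ 2)) * rexp (-b * x ^ 2) :=
          mul_le_mul_of_nonneg_right hx (Real.exp_pos _).le
      _ = 2/b * rexp (-(b/2) * x ^ 2) := by rw [mul_assoc, hmul]

lemma integral_sq_exp {b : ℝ} (hb : 0 < b) :
    ∫ x : ℝ, x ^ 2 * rexp (-b * x ^ 2) = Real.sqrt (π / b) / (2 * b) := by
  have hu : ∀ x : ℝ, HasDerivAt (fun x : ℝ => x) 1 x := fun x => hasDerivAt_id x
  have hv : ∀ x : ℝ, HasDerivAt (fun x : ℝ => -(1/(2*b)) * rexp (-b * x ^ 2))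
      (x * rexp (-b * x ^ 2)) x := by
    intro x
    have h1 : HasDerivAt (fun x : ℝ => -b * x ^ 2) (-b * (2 * x)) x := by
      simpa using ((hasDerivAt_pow 2 x).const_mul (-b))
    have h2 := (h1.exp).const_mul (-(1/(2*b)))
    refine h2.congr_deriv ?_
    have hb0 : b ≠ 0 := hb.ne'
    field_simp
  have huv' : Integrable ((fun x : ℝ => x) * fun x => x * rexp (-b * x ^ 2)) := by
    refine (integrable_sq_exp hb).congr (Filter.Eventually.of_forall fun x => ?_)
    simp [Pi.mul_apply]; ring
  have hu'v : Integrable ((fun _ : ℝ => (1:ℝ)) * fun x => -(1/(2*b)) * rexp (-b * x ^ 2)) := by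
    refine ((integrable_exp_neg_mul_sq hb).const_mul (-(1/(2*b)))).congr
      (Filter.Eventually.of_forall fun x => ?_)
    simp [Pi.mul_apply]
  have huv : Integrable ((fun x : ℝ => x) * fun x => -(1/(2*b)) * rexp (-b * x ^ 2)) := by
    refine ((integrable_mul_exp_neg_mul_sq hb).const_mul (-(1/(2*b)))).congr
      (Filter.Eventually.of_forall fun x => ?_)
    simp [Pi.mul_apply]; ring
  have key := integral_mul_deriv_eq_deriv_mul_of_integrable (fun x _ => hu x) (fun x _ => hv x) huv' hu'v huv
  have e1 : ∫ x : ℝ, x * (x * rexp (-b * x ^ 2)) = ∫ x : ℝ, x ^ 2 * rexp (-b * x ^ 2) := by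
    congr 1; funext x; ring
  have e2 : ∫ x : ℝ, (1:ℝ) * (-(1/(2*b)) * rexp (-b * x ^ 2)) =
      -(1/(2*b)) * Real.sqrt (π / b) := by
    simp_rw [one_mul]
    rw [integral_const_mul, integral_gaussian]
  rw [e1, e2] at key
  rw [key]
  field_simp


lemma gaussianPDFReal_zero_eq (v : ℝ≥0) (x : ℝ) :
    gaussianPDFReal 0 v x = (Real.sqrt (2 * π * v))⁻¹ * rexp (-(2 * (v:ℝ))⁻¹ * x ^ 2) := by
  rw [gaussianPDFReal]
  congr 1
  rw [sub_zero]
  field_simp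

lemma integrable_sq_mul_gaussianPDFReal {v : ℝ≥0} (hv : v ≠ 0) :
    Integrable (fun x : ℝ => x ^ 2 * gaussianPDFReal 0 v x) := by
  have hvpos : (0:ℝ) < v := by positivity
  have hb : (0:ℝ) < (2 * (v:ℝ))⁻¹ := by positivity
  simp_rw [gaussianPDFReal_zero_eq]
  have := (integrable_sq_exp hb).const_mul (Real.sqrt (2 * π * v))⁻¹
  refine this.congr (Filter.Eventually.of_forall fun x => ?_)
  ring

lemma integral_sq_mul_gaussianPDFReal {v : ℝ≥0} (hv : v ≠ 0) :
    ∫ x : ℝ, x ^ 2 * gaussianPDFReal 0 v x = v := by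
  have hvpos : (0:ℝ) < v := by positivity
  have hb : (0:ℝ) < (2 * (v:ℝ))⁻¹ := by positivity
  simp_rw [gaussianPDFReal_zero_eq]
  have e : ∀ x : ℝ, x ^ 2 * ((Real.sqrt (2 * π * v))⁻¹ * rexp (-(2 * (v:ℝ))⁻¹ * x ^ 2))
      = (Real.sqrt (2 * π * v))⁻¹ * (x ^ 2 * rexp (-(2 * (v:ℝ))⁻¹ * x ^ 2)) := fun x => by ring
  simp_rw [e]
  rw [integral_const_mul, integral_sq_exp hb]
  have h1 : π / (2 * (v:ℝ))⁻¹ = 2 * π * v := by field_simp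
  rw [h1]
  have h2 : Real.sqrt (2 * π * v) > 0 := by positivity
  field_simp

lemma lintegral_gaussianReal {v : ℝ≥0} (hv : v ≠ 0) {f : ℝ → ℝ≥0∞} (hf : Measurable f) :
    ∫⁻ x, f x ∂(gaussianReal 0 v) = ∫⁻ x, gaussianPDF 0 v x * f x := by
  rw [gaussianReal_of_var_ne_zero 0 hv,
    lintegral_withDensity_eq_lintegral_mul _ (measurable_gaussianPDF 0 v) hf]
  rfl

lemma lintegral_sq_gaussianReal {v : ℝ≥0} (hv : v ≠ 0) :
    ∫⁻ x, ENNReal.ofReal (x ^ 2) ∂(gaussianReal 0 v) = ENNReal.ofReal v := by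
  rw [lintegral_gaussianReal hv (by fun_prop)]
  have e : ∀ x : ℝ, gaussianPDF 0 v x * ENNReal.ofReal (x ^ 2)
      = ENNReal.ofReal (x ^ 2 * gaussianPDFReal 0 v x) := by
    intro x
    rw [gaussianPDF, ← ENNReal.ofReal_mul (gaussianPDFReal_nonneg 0 v x)]
    congr 1; ring
  simp_rw [e]
  rw [← ofReal_integral_eq_lintegral_ofReal (integrable_sq_mul_gaussianPDFReal hv)
    (Filter.Eventually.of_forall fun x => mul_nonneg (sq_nonneg x) (gaussianPDFReal_nonneg 0 v x)),
    integral_sq_mul_gaussianPDFReal hv]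

lemma integrable_sq_gaussianReal {v : ℝ≥0} (hv : v ≠ 0) :
    Integrable (fun x : ℝ => x ^ 2) (gaussianReal 0 v) := by
  refine ⟨(by fun_prop : Measurable fun x : ℝ => x ^ 2).aestronglyMeasurable, ?_⟩
  rw [hasFiniteIntegral_iff_ofReal (Filter.Eventually.of_forall fun x => sq_nonneg x)]
  rw [lintegral_sq_gaussianReal hv]
  exact ENNReal.ofReal_lt_top

lemma integral_sq_gaussianReal {v : ℝ≥0} (hv : v ≠ 0) :
    ∫ x, x ^ 2 ∂(gaussianReal 0 v) = v := by
  rw [integral_eq_lintegral_of_nonneg_ae (Filter.Eventually.of_forall fun x => sq_nonneg x)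
    (by fun_prop : Measurable fun x : ℝ => x ^ 2).aestronglyMeasurable,
    lintegral_sq_gaussianReal hv, ENNReal.toReal_ofReal (by positivity)]

lemma integrable_id_gaussianReal {v : ℝ≥0} (hv : v ≠ 0) :
    Integrable (fun x : ℝ => x) (gaussianReal 0 v) := by
  refine ((integrable_const (1:ℝ)).add (integrable_sq_gaussianReal hv)).mono'
    (by fun_prop : Measurable fun x : ℝ => x).aestronglyMeasurable
    (Filter.Eventually.of_forall fun x => ?_)
  rw [Real.norm_eq_abs]
  simp only [Pi.add_apply]
  nlinarith [abs_nonneg x, sq_abs x, sq_nonneg (|x| - 1)]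

lemma integral_id_gaussianReal {v : ℝ≥0} (hv : v ≠ 0) :
    ∫ x, x ∂(gaussianReal 0 v) = 0 := by
  have hmap := gaussianReal_map_const_mul (μ := 0) (v := v) (-1)
  have h1 : (NNReal.mk ((-1:ℝ)^2) (sq_nonneg _) * v : ℝ≥0) = v := by
    ext; simp only [NNReal.coe_mul, NNReal.coe_mk]; norm_num
  rw [mul_zero, h1] at hmap
  have h2 : ∫ x, x ∂(gaussianReal 0 v)
      = ∫ x, x ∂(Measure.map (fun x : ℝ => -1 * x) (gaussianReal 0 v)) := by rw [hmap]
  rw [integral_map (by fun_prop) (by fun_prop : Measurable fun x : ℝ => x).aestronglyMeasurable] at h2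
  simp only [neg_mul, one_mul] at h2
  have h3 : ∫ x, -x ∂(gaussianReal 0 v) = - ∫ x, x ∂(gaussianReal 0 v) := integral_neg _
  linarith [h2, h3]


/-- Gaussian pdf with real variance parameter. -/
def gp (u m z : ℝ) : ℝ := (Real.sqrt (2 * π * u))⁻¹ * rexp (-(z - m) ^ 2 / (2 * u))

lemma gp_pos {u : ℝ} (hu : 0 < u) (m z : ℝ) : 0 < gp u m z := by
  unfold gp; positivity

lemma gp_measurable (u m : ℝ) : Measurable (gp u m) := by
  unfold gp; fun_prop

lemma gp_eq_gaussianPDFReal {u : ℝ} (hu : 0 < u) (m z : ℝ) :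
    gp u m z = gaussianPDFReal m u.toNNReal z := by
  rw [gaussianPDFReal, gp, Real.coe_toNNReal u hu.le]

lemma lintegral_gp {u : ℝ} (hu : 0 < u) (m : ℝ) :
    ∫⁻ z : ℝ, ENNReal.ofReal (gp u m z) = 1 := by
  have h : u.toNNReal ≠ 0 := by
    simp only [ne_eq, Real.toNNReal_eq_zero, not_le]; exact hu
  simp_rw [gp_eq_gaussianPDFReal hu m]
  exact lintegral_gaussianPDFReal_eq_one m h

lemma log_gp {u : ℝ} (hu : 0 < u) (m z : ℝ) :
    Real.log (gp u m z) = -(Real.log (2 * π * u)) / 2 - (z - m) ^ 2 / (2 * u) := by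
  rw [gp, Real.log_mul (by positivity) (Real.exp_ne_zero _), Real.log_inv,
    Real.log_sqrt (by positivity), Real.log_exp]
  ring

section Main

variable {V1 Vw : ℝ≥0}

lemma lintegral_ratio (h1 : V1 ≠ 0) (hw : Vw ≠ 0) {γ ψ : ℝ → ℝ} (hγ : Measurable γ) (hψ : Measurable ψ)
    {s t : ℝ} (hs : 0 < s) (ht : 0 < t) :
    ∫⁻ p : ℝ × ℝ, ENNReal.ofReal
        (gp s 0 (γ p.1 + p.2) * gp t (ψ (γ p.1 + p.2)) p.1 / (gp (V1:ℝ) 0 p.1 * gp (Vw:ℝ) 0 p.2))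
      ∂((gaussianReal 0 V1).prod (gaussianReal 0 Vw)) = 1 := by
  have hV1 : (0:ℝ) < V1 := by positivity
  have hVw : (0:ℝ) < Vw := by positivity
  set μ1 := gaussianReal 0 V1
  set μw := gaussianReal 0 Vw
  have hgp1 : gaussianPDF 0 V1 = fun x => ENNReal.ofReal (gp (V1:ℝ) 0 x) := by
    funext x
    rw [gaussianPDF_def, gp_eq_gaussianPDFReal hV1]
    simp
  have hgpw : gaussianPDF 0 Vw = fun x => ENNReal.ofReal (gp (Vw:ℝ) 0 x) := by
    funext x
    rw [gaussianPDF_def, gp_eq_gaussianPDFReal hVw]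
    simp
  have hRm : Measurable fun p : ℝ × ℝ =>
      gp s 0 (γ p.1 + p.2) * gp t (ψ (γ p.1 + p.2)) p.1 / (gp (V1:ℝ) 0 p.1 * gp (Vw:ℝ) 0 p.2) := by
    unfold gp; fun_prop
  rw [lintegral_prod _ (hRm.ennreal_ofReal).aemeasurable]
  have inner : ∀ x : ℝ, (∫⁻ w, ENNReal.ofReal
      (gp s 0 (γ x + w) * gp t (ψ (γ x + w)) x / (gp (V1:ℝ) 0 x * gp (Vw:ℝ) 0 w)) ∂μw)
      = ∫⁻ y : ℝ, ENNReal.ofReal (gp s 0 y * gp t (ψ y) x / gp (V1:ℝ) 0 x) := by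
    intro x
    have hmw : Measurable fun w : ℝ => ENNReal.ofReal
        (gp s 0 (γ x + w) * gp t (ψ (γ x + w)) x / (gp (V1:ℝ) 0 x * gp (Vw:ℝ) 0 w)) := by
      unfold gp; fun_prop
    rw [show μw = gaussianReal 0 Vw from rfl, gaussianReal_of_var_ne_zero 0 hw,
      lintegral_withDensity_eq_lintegral_mul _ (measurable_gaussianPDF 0 Vw) hmw]
    have hcongr : ∀ w : ℝ, (gaussianPDF 0 Vw * fun w => ENNReal.ofReal
        (gp s 0 (γ x + w) * gp t (ψ (γ x + w)) x / (gp (V1:ℝ) 0 x * gp (Vw:ℝ) 0 w))) w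
        = ENNReal.ofReal (gp s 0 (γ x + w) * gp t (ψ (γ x + w)) x / gp (V1:ℝ) 0 x) := by
      intro w
      simp only [Pi.mul_apply, hgpw]
      rw [← ENNReal.ofReal_mul (gp_pos hVw 0 w).le]
      congr 1
      have hne1 : gp (V1:ℝ) 0 x ≠ 0 := (gp_pos hV1 0 x).ne'
      have hnew : gp (Vw:ℝ) 0 w ≠ 0 := (gp_pos hVw 0 w).ne'
      field_simp
    rw [lintegral_congr hcongr]
    have := lintegral_add_right_eq_self (μ := volume)
      (fun y : ℝ => ENNReal.ofReal (gp s 0 y * gp t (ψ y) x / gp (V1:ℝ) 0 x)) (γ x)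
    rw [← this]
    apply lintegral_congr
    intro w
    simp [add_comm]
  rw [lintegral_congr fun x => inner x]
  have hmeas2 : Measurable fun x : ℝ => ∫⁻ y : ℝ, ENNReal.ofReal
      (gp s 0 y * gp t (ψ y) x / gp (V1:ℝ) 0 x) := by
    apply Measurable.lintegral_prod_right (f := fun (x : ℝ) (y : ℝ) => ENNReal.ofReal
      (gp s 0 y * gp t (ψ y) x / gp (V1:ℝ) 0 x))
    unfold gp; fun_prop
  rw [show μ1 = gaussianReal 0 V1 from rfl, gaussianReal_of_var_ne_zero 0 h1,
    lintegral_withDensity_eq_lintegral_mul _ (measurable_gaussianPDF 0 V1) hmeas2]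
  have hcongr2 : ∀ x : ℝ, (gaussianPDF 0 V1 * fun x => ∫⁻ y : ℝ, ENNReal.ofReal
      (gp s 0 y * gp t (ψ y) x / gp (V1:ℝ) 0 x)) x
      = ∫⁻ y : ℝ, ENNReal.ofReal (gp s 0 y * gp t (ψ y) x) := by
    intro x
    simp only [Pi.mul_apply, hgp1]
    rw [← lintegral_const_mul _ (by unfold gp; fun_prop)]
    apply lintegral_congr
    intro y
    rw [← ENNReal.ofReal_mul (gp_pos hV1 0 x).le]
    congr 1
    have hne1 : gp (V1:ℝ) 0 x ≠ 0 := (gp_pos hV1 0 x).ne'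
    field_simp
  rw [lintegral_congr hcongr2]
  rw [lintegral_lintegral_swap (by unfold gp; fun_prop)]
  have hinner3 : ∀ y : ℝ, (∫⁻ x : ℝ, ENNReal.ofReal (gp s 0 y * gp t (ψ y) x))
      = ENNReal.ofReal (gp s 0 y) := by
    intro y
    have : ∀ x : ℝ, ENNReal.ofReal (gp s 0 y * gp t (ψ y) x)
        = ENNReal.ofReal (gp s 0 y) * ENNReal.ofReal (gp t (ψ y) x) :=
      fun x => ENNReal.ofReal_mul (gp_pos hs 0 y).le
    simp_rw [this]
    rw [lintegral_const_mul _ (by unfold gp; fun_prop), lintegral_gp ht, mul_one]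
  rw [lintegral_congr hinner3, lintegral_gp hs]

end Main

section Main
variable {V1 Vw : ℝ≥0}

lemma map_fst_prod_gauss (h1 : V1 ≠ 0) (hw : Vw ≠ 0) :
    Measure.map Prod.fst ((gaussianReal 0 V1).prod (gaussianReal 0 Vw)) = gaussianReal 0 V1 := by
  rw [Measure.map_fst_prod]
  simp

lemma map_snd_prod_gauss (h1 : V1 ≠ 0) (hw : Vw ≠ 0) :
    Measure.map Prod.snd ((gaussianReal 0 V1).prod (gaussianReal 0 Vw)) = gaussianReal 0 Vw := by
  rw [Measure.map_snd_prod]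
  simp

lemma integrable_comp_fst (h1 : V1 ≠ 0) (hw : Vw ≠ 0) {f : ℝ → ℝ} (hf : Measurable f)
    (hint : Integrable f (gaussianReal 0 V1)) :
    Integrable (fun p : ℝ × ℝ => f p.1) ((gaussianReal 0 V1).prod (gaussianReal 0 Vw)) := by
  have := (integrable_map_measure (μ := (gaussianReal 0 V1).prod (gaussianReal 0 Vw))
    (f := Prod.fst) (g := f) ?_ measurable_fst.aemeasurable).mp ?_
  · exact this
  · rw [map_fst_prod_gauss h1 hw]; exact hf.aestronglyMeasurable
  · rw [map_fst_prod_gauss h1 hw]; exact hint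

lemma integral_comp_fst (h1 : V1 ≠ 0) (hw : Vw ≠ 0) {f : ℝ → ℝ} (hf : Measurable f) :
    ∫ p : ℝ × ℝ, f p.1 ∂((gaussianReal 0 V1).prod (gaussianReal 0 Vw))
      = ∫ x, f x ∂(gaussianReal 0 V1) := by
  rw [← map_fst_prod_gauss h1 hw, integral_map measurable_fst.aemeasurable]
  rw [map_fst_prod_gauss h1 hw]
  exact hf.aestronglyMeasurable

lemma integrable_comp_snd (h1 : V1 ≠ 0) (hw : Vw ≠ 0) {f : ℝ → ℝ} (hf : Measurable f)
    (hint : Integrable f (gaussianReal 0 Vw)) :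
    Integrable (fun p : ℝ × ℝ => f p.2) ((gaussianReal 0 V1).prod (gaussianReal 0 Vw)) := by
  have := (integrable_map_measure (μ := (gaussianReal 0 V1).prod (gaussianReal 0 Vw))
    (f := Prod.snd) (g := f) ?_ measurable_snd.aemeasurable).mp ?_
  · exact this
  · rw [map_snd_prod_gauss h1 hw]; exact hf.aestronglyMeasurable
  · rw [map_snd_prod_gauss h1 hw]; exact hint

lemma integral_comp_snd (h1 : V1 ≠ 0) (hw : Vw ≠ 0) {f : ℝ → ℝ} (hf : Measurable f) :
    ∫ p : ℝ × ℝ, f p.2 ∂((gaussianReal 0 V1).prod (gaussianReal 0 Vw))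
      = ∫ x, f x ∂(gaussianReal 0 Vw) := by
  rw [← map_snd_prod_gauss h1 hw, integral_map measurable_snd.aemeasurable]
  rw [map_snd_prod_gauss h1 hw]
  exact hf.aestronglyMeasurable

lemma integrable_abs_of_sq {μ : Measure ℝ} [IsProbabilityMeasure μ] {f : ℝ → ℝ}
    (hf : Measurable f) (h : Integrable (fun x => f x ^ 2) μ) :
    Integrable f μ := by
  refine ((integrable_const (1:ℝ)).add h).mono' hf.aestronglyMeasurable
    (Filter.Eventually.of_forall fun x => ?_)
  simp only [Pi.add_apply, Real.norm_eq_abs]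
  nlinarith [abs_nonneg (f x), sq_abs (f x), sq_nonneg (|f x| - 1)]

lemma converse_key (h1 : V1 ≠ 0) (hw : Vw ≠ 0) {γ ψ : ℝ → ℝ}
    (hγ : Measurable γ) (hψ : Measurable ψ)
    (hP : Integrable (fun p : ℝ × ℝ => γ p.1 ^ 2) ((gaussianReal 0 V1).prod (gaussianReal 0 Vw)))
    (hD : Integrable (fun p : ℝ × ℝ => (ψ (γ p.1 + p.2) - p.1) ^ 2)
      ((gaussianReal 0 V1).prod (gaussianReal 0 Vw)))
    {t : ℝ} (ht : 0 < t) :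
    1 - (∫ p : ℝ × ℝ, (ψ (γ p.1 + p.2) - p.1) ^ 2
          ∂((gaussianReal 0 V1).prod (gaussianReal 0 Vw))) / t
      ≤ Real.log ((∫ p : ℝ × ℝ, γ p.1 ^ 2 ∂((gaussianReal 0 V1).prod (gaussianReal 0 Vw))) + Vw)
        + Real.log t - Real.log (Vw:ℝ) - Real.log (V1:ℝ) := by
  have hV1 : (0:ℝ) < V1 := by positivity
  have hVw : (0:ℝ) < Vw := by positivity
  set ν := (gaussianReal 0 V1).prod (gaussianReal 0 Vw) with hν
  set P := ∫ p : ℝ × ℝ, γ p.1 ^ 2 ∂ν with hPdef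
  set D := ∫ p : ℝ × ℝ, (ψ (γ p.1 + p.2) - p.1) ^ 2 ∂ν with hDdef
  have hP0 : 0 ≤ P := integral_nonneg fun p => sq_nonneg _
  set s := P + (Vw:ℝ) with hsdef
  have hs : 0 < s := by positivity
  -- the ratio function
  set R : ℝ × ℝ → ℝ := fun p =>
    gp s 0 (γ p.1 + p.2) * gp t (ψ (γ p.1 + p.2)) p.1 / (gp (V1:ℝ) 0 p.1 * gp (Vw:ℝ) 0 p.2)
    with hRdef
  have hRm : Measurable R := by unfold R; unfold gp; fun_prop
  have hR0 : ∀ p, 0 ≤ R p := fun p => le_of_lt (by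
    apply div_pos (mul_pos (gp_pos hs _ _) (gp_pos ht _ _))
      (mul_pos (gp_pos hV1 _ _) (gp_pos hVw _ _)))
  have hlR : ∫⁻ p, ENNReal.ofReal (R p) ∂ν = 1 := lintegral_ratio h1 hw hγ hψ hs ht
  have hRint : Integrable R ν := by
    refine ⟨hRm.aestronglyMeasurable, ?_⟩
    rw [hasFiniteIntegral_iff_ofReal (Filter.Eventually.of_forall hR0), hlR]
    exact ENNReal.one_lt_top
  have hRval : ∫ p, R p ∂ν = 1 := by
    rw [integral_eq_lintegral_of_nonneg_ae (Filter.Eventually.of_forall hR0)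
      hRm.aestronglyMeasurable, hlR]
    simp
  -- component integrability and moments
  have hfsq : Integrable (fun p : ℝ × ℝ => p.1 ^ 2) ν :=
    integrable_comp_fst h1 hw (by fun_prop) (integrable_sq_gaussianReal h1)
  have hfsqval : ∫ p : ℝ × ℝ, p.1 ^ 2 ∂ν = (V1:ℝ) := by
    rw [hν, integral_comp_fst h1 hw (f := fun x : ℝ => x ^ 2) (by fun_prop),
      integral_sq_gaussianReal h1]
  have hssq : Integrable (fun p : ℝ × ℝ => p.2 ^ 2) ν :=
    integrable_comp_snd h1 hw (by fun_prop) (integrable_sq_gaussianReal hw)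
  have hssqval : ∫ p : ℝ × ℝ, p.2 ^ 2 ∂ν = (Vw:ℝ) := by
    rw [hν, integral_comp_snd h1 hw (f := fun x : ℝ => x ^ 2) (by fun_prop),
      integral_sq_gaussianReal hw]
  have hPμ1 : Integrable (fun x => γ x ^ 2) (gaussianReal 0 V1) := by
    rw [← map_fst_prod_gauss h1 hw,
      integrable_map_measure ?_ measurable_fst.aemeasurable]
    · exact hP
    · rw [map_fst_prod_gauss h1 hw]
      exact (hγ.pow_const 2).aestronglyMeasurable
  have hγint : Integrable γ (gaussianReal 0 V1) := integrable_abs_of_sq hγ hPμ1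
  have hcross : Integrable (fun p : ℝ × ℝ => γ p.1 * p.2) ν :=
    hγint.mul_prod (integrable_id_gaussianReal hw)
  have hcrossval : ∫ p : ℝ × ℝ, γ p.1 * p.2 ∂ν = 0 := by
    rw [hν, integral_prod_mul γ (fun y => y), integral_id_gaussianReal hw, mul_zero]
  have hy2 : Integrable (fun p : ℝ × ℝ => (γ p.1 + p.2) ^ 2) ν := by
    have : (fun p : ℝ × ℝ => (γ p.1 + p.2) ^ 2)
        = fun p : ℝ × ℝ => γ p.1 ^ 2 + (2 * (γ p.1 * p.2) + p.2 ^ 2) := by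
      funext p; ring
    rw [this]
    exact hP.add ((hcross.const_mul 2).add hssq)
  have hy2val : ∫ p : ℝ × ℝ, (γ p.1 + p.2) ^ 2 ∂ν = s := by
    have e : (fun p : ℝ × ℝ => (γ p.1 + p.2) ^ 2)
        = fun p : ℝ × ℝ => γ p.1 ^ 2 + (2 * (γ p.1 * p.2) + p.2 ^ 2) := by
      funext p; ring
    have j1 : Integrable (fun p : ℝ × ℝ => 2 * (γ p.1 * p.2)) ν := by
      exact hcross.const_mul 2
    have j2 : Integrable (fun p : ℝ × ℝ => 2 * (γ p.1 * p.2) + p.2 ^ 2) ν := by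
      exact j1.add hssq
    rw [e, integral_add hP j2, integral_add j1 hssq, integral_const_mul, hcrossval, hssqval]
    simp [hsdef, hPdef]
  -- the dominating function G
  set K : ℝ := (Real.log s + Real.log t - Real.log (Vw:ℝ) - Real.log (V1:ℝ)) / 2 with hKdef
  set G : ℝ × ℝ → ℝ := fun p =>
    -(p.2 ^ 2) / (2 * Vw) - p.1 ^ 2 / (2 * V1) + (γ p.1 + p.2) ^ 2 / (2 * s)
      + (ψ (γ p.1 + p.2) - p.1) ^ 2 / (2 * t) + K with hGdef
  have i1 : Integrable (fun p : ℝ × ℝ => -(p.2 ^ 2) / (2 * (Vw:ℝ))) ν := hssq.neg.div_const _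
  have i2 : Integrable (fun p : ℝ × ℝ => p.1 ^ 2 / (2 * (V1:ℝ))) ν := hfsq.div_const _
  have i3 : Integrable (fun p : ℝ × ℝ => (γ p.1 + p.2) ^ 2 / (2 * s)) ν := hy2.div_const _
  have i4 : Integrable (fun p : ℝ × ℝ => (ψ (γ p.1 + p.2) - p.1) ^ 2 / (2 * t)) ν :=
    hD.div_const _
  have i7 : Integrable (fun p : ℝ × ℝ => -(p.2 ^ 2) / (2 * (Vw:ℝ)) - p.1 ^ 2 / (2 * (V1:ℝ))) ν := by
    exact i1.sub i2
  have i6 : Integrable (fun p : ℝ × ℝ => -(p.2 ^ 2) / (2 * (Vw:ℝ)) - p.1 ^ 2 / (2 * (V1:ℝ))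
      + (γ p.1 + p.2) ^ 2 / (2 * s)) ν := by exact i7.add i3
  have i5 : Integrable (fun p : ℝ × ℝ => -(p.2 ^ 2) / (2 * (Vw:ℝ)) - p.1 ^ 2 / (2 * (V1:ℝ))
      + (γ p.1 + p.2) ^ 2 / (2 * s) + (ψ (γ p.1 + p.2) - p.1) ^ 2 / (2 * t)) ν := by
    exact i6.add i4
  have hGint : Integrable G ν := by exact i5.add (integrable_const K)
  -- pointwise inequality
  have hpt : ∀ p : ℝ × ℝ, 1 - R p ≤ G p := by
    intro p
    obtain ⟨x, w⟩ := p
    set y := γ x + w with hydef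
    have hRp : 0 < R (x, w) := lt_of_le_of_ne (hR0 _) (by
      symm
      exact ne_of_gt (div_pos (mul_pos (gp_pos hs _ _) (gp_pos ht _ _))
        (mul_pos (gp_pos hV1 _ _) (gp_pos hVw _ _))))
    have hlog := Real.log_le_sub_one_of_pos hRp
    -- 1 - R ≤ -log R
    have h2 : 1 - R (x, w) ≤ - Real.log (R (x, w)) := by linarith
    refine le_trans h2 ?_
    have hexp : - Real.log (R (x, w)) = G (x, w) := by
      have e1 : Real.log (R (x, w)) = Real.log (gp s 0 y) + Real.log (gp t (ψ y) x)
          - (Real.log (gp (V1:ℝ) 0 x) + Real.log (gp (Vw:ℝ) 0 w)) := by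
        rw [hRdef]
        simp only
        rw [Real.log_div (mul_pos (gp_pos hs 0 y) (gp_pos ht (ψ y) x)).ne'
            (mul_pos (gp_pos hV1 0 x) (gp_pos hVw 0 w)).ne',
          Real.log_mul (gp_pos hs 0 y).ne' (gp_pos ht (ψ y) x).ne',
          Real.log_mul (gp_pos hV1 0 x).ne' (gp_pos hVw 0 w).ne']
      rw [e1, log_gp hs, log_gp ht, log_gp hV1, log_gp hVw]
      have l2π : (0:ℝ) < 2 * π := by positivity
      rw [hGdef]
      simp only
      have ls : Real.log (2 * π * s) = Real.log (2 * π) + Real.log s :=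
        Real.log_mul l2π.ne' hs.ne'
      have lt' : Real.log (2 * π * t) = Real.log (2 * π) + Real.log t :=
        Real.log_mul l2π.ne' ht.ne'
      have lV1 : Real.log (2 * π * V1) = Real.log (2 * π) + Real.log (V1:ℝ) :=
        Real.log_mul l2π.ne' hV1.ne'
      have lVw : Real.log (2 * π * Vw) = Real.log (2 * π) + Real.log (Vw:ℝ) :=
        Real.log_mul l2π.ne' hVw.ne'
      rw [ls, lt', lV1, lVw, hKdef]
      have hsq : (x - ψ y) ^ 2 = (ψ y - x) ^ 2 := by ring
      rw [hsq]
      ring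
    rw [hexp]
  -- integrate
  have hint1 : Integrable (fun p : ℝ × ℝ => 1 - R p) ν := (integrable_const 1).sub hRint
  have hmono := integral_mono hint1 hGint hpt
  have hval1 : ∫ p, (1 - R p) ∂ν = 0 := by
    rw [integral_sub (integrable_const 1) hRint, hRval]
    simp
  have hvalG : ∫ p, G p ∂ν
      = -(Vw:ℝ) / (2 * Vw) - (V1:ℝ) / (2 * V1) + s / (2 * s) + D / (2 * t) + K := by
    rw [hGdef]
    simp only
    rw [integral_add i5 (integrable_const K),
      integral_add i6 i4,
      integral_add i7 i3,
      integral_sub i1 i2,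
      integral_div, integral_div, integral_div, integral_div,
      integral_neg, hssqval, hfsqval, hy2val, ← hDdef, integral_const]
    simp [neg_div]
  rw [hval1, hvalG] at hmono
  have e1 : (Vw:ℝ) / (2 * Vw) = 1 / 2 := by field_simp
  have e2 : (V1:ℝ) / (2 * V1) = 1 / 2 := by field_simp
  have e3 : s / (2 * s) = 1 / 2 := by field_simp
  have e4 : D / t = 2 * (D / (2 * t)) := by field_simp
  rw [neg_div] at hmono
  rw [hKdef] at hmono
  linarith [hmono, e1, e2, e3, e4]

end Main


section Main
variable {V1 Vw : ℝ≥0}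

lemma prod_bound (h1 : V1 ≠ 0) (hw : Vw ≠ 0) {γ ψ : ℝ → ℝ}
    (hγ : Measurable γ) (hψ : Measurable ψ)
    (hP : Integrable (fun p : ℝ × ℝ => γ p.1 ^ 2) ((gaussianReal 0 V1).prod (gaussianReal 0 Vw)))
    (hD : Integrable (fun p : ℝ × ℝ => (ψ (γ p.1 + p.2) - p.1) ^ 2)
      ((gaussianReal 0 V1).prod (gaussianReal 0 Vw))) :
    (V1:ℝ) * (Vw:ℝ) ≤
      (∫ p : ℝ × ℝ, (ψ (γ p.1 + p.2) - p.1) ^ 2 ∂((gaussianReal 0 V1).prod (gaussianReal 0 Vw)))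
      * ((∫ p : ℝ × ℝ, γ p.1 ^ 2 ∂((gaussianReal 0 V1).prod (gaussianReal 0 Vw))) + (Vw:ℝ)) := by
  have hV1 : (0:ℝ) < V1 := by positivity
  have hVw : (0:ℝ) < Vw := by positivity
  set ν := (gaussianReal 0 V1).prod (gaussianReal 0 Vw) with hν
  set P := ∫ p : ℝ × ℝ, γ p.1 ^ 2 ∂ν with hPdef
  set D := ∫ p : ℝ × ℝ, (ψ (γ p.1 + p.2) - p.1) ^ 2 ∂ν with hDdef
  have hP0 : 0 ≤ P := integral_nonneg fun p => sq_nonneg _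
  have hD0 : 0 ≤ D := integral_nonneg fun p => sq_nonneg _
  have hs : (0:ℝ) < P + Vw := by positivity
  have hDpos : 0 < D := by
    rcases hD0.lt_or_eq with h | h
    · exact h
    · exfalso
      set c : ℝ := Real.log (Vw:ℝ) + Real.log (V1:ℝ) - Real.log (P + (Vw:ℝ)) - 1 with hc
      have key := converse_key h1 hw hγ hψ hP hD (t := rexp c) (Real.exp_pos c)
      rw [← hDdef, ← hPdef, ← h, Real.log_exp] at key
      simp only [zero_div, sub_zero, hc] at key
      linarith
  have key := converse_key h1 hw hγ hψ hP hD (t := D) hDpos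
  rw [← hDdef, ← hPdef, div_self hDpos.ne'] at key
  have hlog : Real.log ((V1:ℝ) * (Vw:ℝ)) ≤ Real.log (D * (P + (Vw:ℝ))) := by
    rw [Real.log_mul hV1.ne' hVw.ne', Real.log_mul hDpos.ne' hs.ne']
    linarith
  have := (Real.log_le_log_iff (by positivity) (by positivity)).mp hlog
  linarith [this]

end Main

lemma scalar_bound {A B lam P D : ℝ} (hA : 0 < A) (hB : 0 < B) (hlam : 0 < lam)
    (hP : 0 ≤ P) (hD : 0 ≤ D) (hprod : A ^ 2 * B ^ 2 ≤ D * (P + B ^ 2)) :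
    (if A ^ 2 ≤ lam * B ^ 2 then A ^ 2 else 2 * Real.sqrt lam * (A * B) - lam * B ^ 2)
      ≤ lam * P + D := by
  have hs : (0:ℝ) < P + B ^ 2 := by positivity
  have hD' : A ^ 2 * B ^ 2 / (P + B ^ 2) ≤ D := (div_le_iff₀ hs).mpr hprod
  split_ifs with hc
  · -- A² ≤ lam B²
    have e : (A ^ 2 * B ^ 2 / (P + B ^ 2)) * (P + B ^ 2) = A ^ 2 * B ^ 2 :=
      div_mul_cancel₀ _ hs.ne'
    have key : A ^ 2 * (P + B ^ 2) ≤ (lam * P + A ^ 2 * B ^ 2 / (P + B ^ 2)) * (P + B ^ 2) := by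
      have expand : (lam * P + A ^ 2 * B ^ 2 / (P + B ^ 2)) * (P + B ^ 2)
          = lam * P * (P + B ^ 2) + A ^ 2 * B ^ 2 := by rw [add_mul, e]
      rw [expand]
      nlinarith [mul_le_mul_of_nonneg_right hc hP, mul_nonneg (mul_nonneg hlam.le hP) hP]
    have := le_of_mul_le_mul_right key hs
    linarith
  · push_neg at hc
    have hr : Real.sqrt lam ^ 2 = lam := Real.sq_sqrt hlam.le
    have hr0 : 0 < Real.sqrt lam := Real.sqrt_pos.mpr hlam
    have amgm : 2 * Real.sqrt lam * (A * B) ≤ lam * (P + B ^ 2) + A ^ 2 * B ^ 2 / (P + B ^ 2) := by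
      have hmul : 2 * Real.sqrt lam * (A * B) * (P + B ^ 2)
          ≤ lam * (P + B ^ 2) ^ 2 + A ^ 2 * B ^ 2 := by
        nlinarith [sq_nonneg (Real.sqrt lam * (P + B ^ 2) - A * B), hr, sq_nonneg (P + B ^ 2)]
      have e3 : lam * (P + B ^ 2) + A ^ 2 * B ^ 2 / (P + B ^ 2)
          = (lam * (P + B ^ 2) ^ 2 + A ^ 2 * B ^ 2) / (P + B ^ 2) := by
        field_simp
      rw [e3, le_div_iff₀ hs]
      linarith [hmul]
    nlinarith [amgm, hD']


section Main
variable {V1 Vw : ℝ≥0}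

lemma achieve_linear (h1 : V1 ≠ 0) (hw : Vw ≠ 0) {lam : ℝ} (hlam : 0 < lam) (a b : ℝ) :
    ∫⁻ p : ℝ × ℝ, ENNReal.ofReal (lam * (a * p.1) ^ 2
        + (b * (a * p.1 + p.2) - p.1) ^ 2)
      ∂((gaussianReal 0 V1).prod (gaussianReal 0 Vw))
    = ENNReal.ofReal ((lam * a ^ 2 + (b * a - 1) ^ 2) * (V1:ℝ) + b ^ 2 * (Vw:ℝ)) := by
  set ν := (gaussianReal 0 V1).prod (gaussianReal 0 Vw) with hν
  set F : ℝ × ℝ → ℝ := fun p => lam * (a * p.1) ^ 2 + (b * (a * p.1 + p.2) - p.1) ^ 2 with hF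
  have hF0 : ∀ p, 0 ≤ F p := fun p =>
    add_nonneg (mul_nonneg hlam.le (sq_nonneg _)) (sq_nonneg _)
  have hFm : Measurable F := by unfold F; fun_prop
  have e : F = fun p : ℝ × ℝ => (lam * a ^ 2 + (b * a - 1) ^ 2) * p.1 ^ 2
      + 2 * ((b * a - 1) * b) * (p.1 * p.2) + b ^ 2 * p.2 ^ 2 := by
    funext p; simp only [hF]; ring
  have hfsq : Integrable (fun p : ℝ × ℝ => p.1 ^ 2) ν :=
    integrable_comp_fst h1 hw (by fun_prop) (integrable_sq_gaussianReal h1)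
  have hssq : Integrable (fun p : ℝ × ℝ => p.2 ^ 2) ν :=
    integrable_comp_snd h1 hw (by fun_prop) (integrable_sq_gaussianReal hw)
  have hcross : Integrable (fun p : ℝ × ℝ => p.1 * p.2) ν :=
    (integrable_id_gaussianReal h1).mul_prod (integrable_id_gaussianReal hw)
  have hFint : Integrable F ν := by
    rw [e]
    exact ((hfsq.const_mul _).add (hcross.const_mul _)).add (hssq.const_mul _)
  have hFval : ∫ p, F p ∂ν = (lam * a ^ 2 + (b * a - 1) ^ 2) * (V1:ℝ) + b ^ 2 * (Vw:ℝ) := by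
    have j1 : Integrable (fun p : ℝ × ℝ => (lam * a ^ 2 + (b * a - 1) ^ 2) * p.1 ^ 2) ν :=
      hfsq.const_mul _
    have j2 : Integrable (fun p : ℝ × ℝ => 2 * ((b * a - 1) * b) * (p.1 * p.2)) ν :=
      hcross.const_mul _
    have j3 : Integrable (fun p : ℝ × ℝ => b ^ 2 * p.2 ^ 2) ν := hssq.const_mul _
    have j12 : Integrable (fun p : ℝ × ℝ => (lam * a ^ 2 + (b * a - 1) ^ 2) * p.1 ^ 2
        + 2 * ((b * a - 1) * b) * (p.1 * p.2)) ν := by exact j1.add j2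
    rw [e, integral_add j12 j3, integral_add j1 j2, integral_const_mul, integral_const_mul,
      integral_const_mul]
    have m1 : ∫ p : ℝ × ℝ, p.1 ^ 2 ∂ν = (V1:ℝ) := by
      rw [hν, integral_comp_fst h1 hw (f := fun x : ℝ => x ^ 2) (by fun_prop),
        integral_sq_gaussianReal h1]
    have m2 : ∫ p : ℝ × ℝ, p.2 ^ 2 ∂ν = (Vw:ℝ) := by
      rw [hν, integral_comp_snd h1 hw (f := fun x : ℝ => x ^ 2) (by fun_prop),
        integral_sq_gaussianReal hw]
    have m3 : ∫ p : ℝ × ℝ, p.1 * p.2 ∂ν = 0 := by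
      rw [hν, integral_prod_mul (fun x => x) (fun y => y), integral_id_gaussianReal hw, mul_zero]
    rw [m1, m2, m3]
    ring
  have := ofReal_integral_eq_lintegral_ofReal hFint (Filter.Eventually.of_forall hF0)
  rw [hFval] at this
  rw [← this]

-- the optimal-parameter algebra for the low-lambda case
lemma optimal_value {A B lam : ℝ} (hA : 0 < A) (hB : 0 < B) (hlam : 0 < lam)
    (hc : lam * B ^ 2 < A ^ 2) :
    let Pstar := A * B / Real.sqrt lam - B ^ 2
    let a := Real.sqrt Pstar / A
    let b := a * A ^ 2 / (A * B / Real.sqrt lam)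
    (lam * a ^ 2 + (b * a - 1) ^ 2) * A ^ 2 + b ^ 2 * B ^ 2
      = 2 * Real.sqrt lam * (A * B) - lam * B ^ 2 := by
  intro Pstar a b
  have hr : Real.sqrt lam ^ 2 = lam := Real.sq_sqrt hlam.le
  have hr0 : 0 < Real.sqrt lam := Real.sqrt_pos.mpr hlam
  have hrB : Real.sqrt lam * B < A := by
    by_contra h
    push_neg at h
    have := mul_le_mul_of_nonneg_left h (le_of_lt (mul_pos hr0 hB))
    nlinarith
  have hPstar : 0 < Pstar := by
    show 0 < A * B / Real.sqrt lam - B ^ 2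
    rw [sub_pos, lt_div_iff₀ hr0]
    nlinarith
  have ha2 : a ^ 2 = Pstar / A ^ 2 := by
    show (Real.sqrt Pstar / A) ^ 2 = Pstar / A ^ 2
    rw [div_pow, Real.sq_sqrt hPstar.le]
  have hAB : A * B = Real.sqrt lam * (Pstar + B ^ 2) := by
    have : Pstar = A * B / Real.sqrt lam - B ^ 2 := rfl
    rw [this]
    field_simp
    ring
  have hs0 : (0:ℝ) < Pstar + B ^ 2 := by positivity
  have hbval : b = Real.sqrt Pstar * A / (Pstar + B ^ 2) := by
    show (Real.sqrt Pstar / A) * A ^ 2 / (A * B / Real.sqrt lam) = _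
    rw [show A * B / Real.sqrt lam = (A * B / Real.sqrt lam - B ^ 2) + B ^ 2 by ring]
    show Real.sqrt Pstar / A * A ^ 2 / (Pstar + B ^ 2) = _
    field_simp
  have hba : b * a = Pstar / (Pstar + B ^ 2) := by
    rw [hbval]
    show Real.sqrt Pstar * A / (Pstar + B ^ 2) * (Real.sqrt Pstar / A) = _
    have e5 : Real.sqrt Pstar * A / (Pstar + B ^ 2) * (Real.sqrt Pstar / A)
        = Real.sqrt Pstar * Real.sqrt Pstar * (A / A) / (Pstar + B ^ 2) := by ring
    rw [e5, Real.mul_self_sqrt hPstar.le, div_self hA.ne', mul_one]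
  have hb2 : b ^ 2 = Pstar * A ^ 2 / (Pstar + B ^ 2) ^ 2 := by
    rw [hbval, div_pow, mul_pow, Real.sq_sqrt hPstar.le]
  have t1 : lam * a ^ 2 * A ^ 2 = lam * Pstar := by
    rw [ha2]
    field_simp
  have t2 : (b * a - 1) ^ 2 * A ^ 2 = B ^ 4 * A ^ 2 / (Pstar + B ^ 2) ^ 2 := by
    rw [hba]
    rw [show Pstar / (Pstar + B ^ 2) - 1 = -(B ^ 2) / (Pstar + B ^ 2) by field_simp; ring]
    rw [div_pow]
    ring
  have t3 : b ^ 2 * B ^ 2 = Pstar * A ^ 2 * B ^ 2 / (Pstar + B ^ 2) ^ 2 := by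
    rw [hb2]; ring
  have t23 : B ^ 4 * A ^ 2 / (Pstar + B ^ 2) ^ 2 + Pstar * A ^ 2 * B ^ 2 / (Pstar + B ^ 2) ^ 2
      = lam * (Pstar + B ^ 2) := by
    rw [← add_div]
    rw [show B ^ 4 * A ^ 2 + Pstar * A ^ 2 * B ^ 2 = (A * B) ^ 2 * (Pstar + B ^ 2) by ring]
    rw [hAB]
    rw [show (Real.sqrt lam * (Pstar + B ^ 2)) ^ 2 * (Pstar + B ^ 2)
      = Real.sqrt lam ^ 2 * (Pstar + B ^ 2) ^ 2 * (Pstar + B ^ 2) by ring, hr]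
    field_simp
  have expand : (lam * a ^ 2 + (b * a - 1) ^ 2) * A ^ 2 + b ^ 2 * B ^ 2
      = lam * a ^ 2 * A ^ 2 + ((b * a - 1) ^ 2 * A ^ 2 + b ^ 2 * B ^ 2) := by ring
  rw [expand, t1, t2, t3, t23]
  rw [hAB]
  nlinarith [hr]

end Main

end GaussianTestChannelAux

/-- Existence of optimal encoding and decoding strategies for the (soft-constrained)
Gaussian test channel: with `X₁ ∼ N(0,σ₁²)` and `W₂ ∼ N(0,σ_w²)` independent, the cost
`J(γ₁,γ₂) = E[λ·γ₁(X₁)² + (γ₂(γ₁(X₁) + W₂) − X₁)²]` has a finite infimum over Borel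
measurable strategy pairs, and the infimum is attained. -/
theorem stmt_18
    (σ₁ σw : ℝ≥0) (hσ₁ : 0 < σ₁) (hσw : 0 < σw)
    (lam : ℝ) (hlam : 0 < lam)
    (J : (ℝ → ℝ) → (ℝ → ℝ) → ℝ≥0∞)
    (hJ : ∀ γ₁ γ₂ : ℝ → ℝ, J γ₁ γ₂ =
      ∫⁻ p : ℝ × ℝ,
        ENNReal.ofReal (lam * (γ₁ p.1) ^ 2 + (γ₂ (γ₁ p.1 + p.2) - p.1) ^ 2)
        ∂((gaussianReal 0 (σ₁ ^ 2)).prod (gaussianReal 0 (σw ^ 2)))) :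
    (⨅ γ : {γ : (ℝ → ℝ) × (ℝ → ℝ) // Measurable γ.1 ∧ Measurable γ.2},
        J γ.1.1 γ.1.2) ≠ ⊤ ∧
    ∃ γ₁ γ₂ : ℝ → ℝ, Measurable γ₁ ∧ Measurable γ₂ ∧
      J γ₁ γ₂ =
        ⨅ γ : {γ : (ℝ → ℝ) × (ℝ → ℝ) // Measurable γ.1 ∧ Measurable γ.2},
          J γ.1.1 γ.1.2 := by
  have h1 : (σ₁ ^ 2 : ℝ≥0) ≠ 0 := pow_ne_zero 2 hσ₁.ne'
  have hw : (σw ^ 2 : ℝ≥0) ≠ 0 := pow_ne_zero 2 hσw.ne'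
  set ν := (gaussianReal 0 (σ₁ ^ 2)).prod (gaussianReal 0 (σw ^ 2)) with hν
  set A : ℝ := (σ₁ : ℝ) with hAdef
  set B : ℝ := (σw : ℝ) with hBdef
  have hA : 0 < A := by positivity
  have hB : 0 < B := by positivity
  have hVA : ((σ₁ ^ 2 : ℝ≥0) : ℝ) = A ^ 2 := by push_cast; ring
  have hVB : ((σw ^ 2 : ℝ≥0) : ℝ) = B ^ 2 := by push_cast; ring
  set cstar : ℝ := if A ^ 2 ≤ lam * B ^ 2 then A ^ 2
    else 2 * Real.sqrt lam * (A * B) - lam * B ^ 2 with hcstar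
  -- converse
  have hconv : ∀ (γ ψ : ℝ → ℝ), Measurable γ → Measurable ψ →
      ENNReal.ofReal cstar ≤ J γ ψ := by
    intro γ ψ hγ hψ
    rw [hJ]
    have hnn1 : ∀ p : ℝ × ℝ, 0 ≤ lam * γ p.1 ^ 2 :=
      fun p => mul_nonneg hlam.le (sq_nonneg _)
    have hnn2 : ∀ p : ℝ × ℝ, 0 ≤ (ψ (γ p.1 + p.2) - p.1) ^ 2 := fun p => sq_nonneg _
    have hsplit : ∀ p : ℝ × ℝ, ENNReal.ofReal (lam * γ p.1 ^ 2 + (ψ (γ p.1 + p.2) - p.1) ^ 2)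
        = ENNReal.ofReal (lam * γ p.1 ^ 2) + ENNReal.ofReal ((ψ (γ p.1 + p.2) - p.1) ^ 2) :=
      fun p => ENNReal.ofReal_add (hnn1 p) (hnn2 p)
    simp_rw [hsplit]
    rw [lintegral_add_left (by fun_prop)]
    by_cases hT1 : (∫⁻ p : ℝ × ℝ, ENNReal.ofReal (lam * γ p.1 ^ 2) ∂ν) = ⊤
    · rw [hT1, top_add]; exact le_top
    by_cases hT2 : (∫⁻ p : ℝ × ℝ, ENNReal.ofReal ((ψ (γ p.1 + p.2) - p.1) ^ 2) ∂ν) = ⊤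
    · rw [hT2, add_top]; exact le_top
    have hI1 : Integrable (fun p : ℝ × ℝ => lam * γ p.1 ^ 2) ν :=
      ⟨(by fun_prop : Measurable fun p : ℝ × ℝ => lam * γ p.1 ^ 2).aestronglyMeasurable,
        (hasFiniteIntegral_iff_ofReal (Filter.Eventually.of_forall hnn1)).mpr
          (lt_top_iff_ne_top.mpr hT1)⟩
    have hI2 : Integrable (fun p : ℝ × ℝ => (ψ (γ p.1 + p.2) - p.1) ^ 2) ν :=
      ⟨(by fun_prop : Measurable fun p : ℝ × ℝ =>
          (ψ (γ p.1 + p.2) - p.1) ^ 2).aestronglyMeasurable,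
        (hasFiniteIntegral_iff_ofReal (Filter.Eventually.of_forall hnn2)).mpr
          (lt_top_iff_ne_top.mpr hT2)⟩
    have hP : Integrable (fun p : ℝ × ℝ => γ p.1 ^ 2) ν := by
      have := hI1.const_mul lam⁻¹
      refine this.congr (Filter.Eventually.of_forall fun p => ?_)
      field_simp
    set P := ∫ p : ℝ × ℝ, γ p.1 ^ 2 ∂ν with hPdef
    set D := ∫ p : ℝ × ℝ, (ψ (γ p.1 + p.2) - p.1) ^ 2 ∂ν with hDdef
    have hP0 : 0 ≤ P := integral_nonneg fun p => sq_nonneg _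
    have hD0 : 0 ≤ D := integral_nonneg fun p => sq_nonneg _
    have hprod := prod_bound h1 hw hγ hψ hP hI2
    rw [← hν, ← hPdef, ← hDdef, hVA, hVB] at hprod
    have hsc := scalar_bound hA hB hlam hP0 hD0 hprod
    rw [← hcstar] at hsc
    have hv1 : (∫⁻ p : ℝ × ℝ, ENNReal.ofReal (lam * γ p.1 ^ 2) ∂ν)
        = ENNReal.ofReal (lam * P) := by
      rw [← ofReal_integral_eq_lintegral_ofReal hI1 (Filter.Eventually.of_forall hnn1)]
      congr 1
      rw [hPdef, integral_const_mul]
    have hv2 : (∫⁻ p : ℝ × ℝ, ENNReal.ofReal ((ψ (γ p.1 + p.2) - p.1) ^ 2) ∂ν)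
        = ENNReal.ofReal D := by
      rw [← ofReal_integral_eq_lintegral_ofReal hI2 (Filter.Eventually.of_forall hnn2)]
    rw [hv1, hv2, ← ENNReal.ofReal_add (mul_nonneg hlam.le hP0) hD0]
    exact ENNReal.ofReal_le_ofReal hsc
  -- achiever
  have hach : ∃ γs ψs : ℝ → ℝ, Measurable γs ∧ Measurable ψs ∧
      J γs ψs = ENNReal.ofReal cstar := by
    by_cases hcase : A ^ 2 ≤ lam * B ^ 2
    · refine ⟨fun x => (0:ℝ) * x, fun y => (0:ℝ) * y, by fun_prop, by fun_prop, ?_⟩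
      rw [hJ]
      have := achieve_linear (V1 := σ₁ ^ 2) (Vw := σw ^ 2) h1 hw hlam 0 0
      rw [← hν] at this
      rw [this, hVA, hVB, hcstar, if_pos hcase]
      norm_num
    · push_neg at hcase
      set a : ℝ := Real.sqrt (A * B / Real.sqrt lam - B ^ 2) / A with hadef
      set b : ℝ := a * A ^ 2 / (A * B / Real.sqrt lam) with hbdef
      refine ⟨fun x => a * x, fun y => b * y, by fun_prop, by fun_prop, ?_⟩
      rw [hJ]
      have := achieve_linear (V1 := σ₁ ^ 2) (Vw := σw ^ 2) h1 hw hlam a b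
      rw [← hν] at this
      rw [this, hVA, hVB, hcstar, if_neg (not_le.mpr hcase)]
      congr 1
      exact optimal_value hA hB hlam hcase
  obtain ⟨γs, ψs, hm1, hm2, hJval⟩ := hach
  have hle : (⨅ γ : {γ : (ℝ → ℝ) × (ℝ → ℝ) // Measurable γ.1 ∧ Measurable γ.2},
      J γ.1.1 γ.1.2) ≤ J γs ψs :=
    iInf_le (fun γ : {γ : (ℝ → ℝ) × (ℝ → ℝ) // Measurable γ.1 ∧ Measurable γ.2} =>
      J γ.1.1 γ.1.2) ⟨(γs, ψs), hm1, hm2⟩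
  have hge : ENNReal.ofReal cstar ≤ ⨅ γ : {γ : (ℝ → ℝ) × (ℝ → ℝ) //
      Measurable γ.1 ∧ Measurable γ.2}, J γ.1.1 γ.1.2 :=
    le_iInf fun q => hconv q.1.1 q.1.2 q.2.1 q.2.2
  have hjeq : (⨅ γ : {γ : (ℝ → ℝ) × (ℝ → ℝ) // Measurable γ.1 ∧ Measurable γ.2},
      J γ.1.1 γ.1.2) = ENNReal.ofReal cstar :=
    le_antisymm (hJval ▸ hle) hge
  exact ⟨by rw [hjeq]; exact ENNReal.ofReal_ne_top, γs, ψs, hm1, hm2, by rw [hJval, hjeq]⟩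

end
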